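/- Let A and B be real symmetric n×n matrices and suppose B is indefinite (there exist vectors v₁, v₂ with v₁ᵀBv₁ > 0 and v₂ᵀBv₂ < 0). Then I_≽(A,B) ≠ ∅ (i.e., there exists σ ∈ ℝ with A + σB positive semidefinite) if and only if wᵀAw ≥ 0 for every vector w with wᵀBw = 0. -/

import Mathlib

open Matrix

/-- Key 2-variable algebraic lemma. -/
lemma key_alg (a₁ a₂ b₁ b₂ e c : ℝ) (hb₁ : 0 < b₁) (hb₂ : b₂ < 0)
    (h : ∀ t : ℝ, b₁ + c * t + b₂ * t ^ 2 = 0 → 0 ≤ a₁ + e * t + a₂ * t ^ 2) :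
    a₁ * b₂ ≤ a₂ * b₁ := by
  set D := c ^ 2 - 4 * b₂ * b₁ with hDdef
  have hD : 0 < D := by nlinarith
  set s := Real.sqrt D with hsdef
  have hs : s ^ 2 = D := Real.sq_sqrt hD.le
  have hs0 : 0 ≤ s := Real.sqrt_nonneg _
  have hsc : |c| < s := by
    rw [← Real.sqrt_sq_eq_abs]
    exact Real.sqrt_lt_sqrt (sq_nonneg c) (by nlinarith)
  have hc1 : -c < s := lt_of_le_of_lt (neg_le_abs c) hsc
  have hc2 : c < s := (le_abs_self c).trans_lt hsc
  set tp := (-c - s) / (2 * b₂) with htp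
  set tm := (-c + s) / (2 * b₂) with htm
  have h2b : 2 * b₂ < 0 := by linarith
  have htp0 : 0 < tp := div_pos_of_neg_of_neg (by linarith) h2b
  have htm0 : tm < 0 := div_neg_of_pos_of_neg (by linarith) h2b
  have hb2ne : (2 * b₂) ≠ 0 := ne_of_lt h2b
  have hrootp : b₁ + c * tp + b₂ * tp ^ 2 = 0 := by
    have e1 : b₁ + c * tp + b₂ * tp ^ 2 = (s ^ 2 - (c ^ 2 - 4 * b₂ * b₁)) / (2 * (2 * b₂)) := by
      rw [htp]; field_simp [hb₂.ne]; ring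
    rw [e1, hs, hDdef, sub_self, zero_div]
  have hrootm : b₁ + c * tm + b₂ * tm ^ 2 = 0 := by
    have e1 : b₁ + c * tm + b₂ * tm ^ 2 = (s ^ 2 - (c ^ 2 - 4 * b₂ * b₁)) / (2 * (2 * b₂)) := by
      rw [htm]; field_simp [hb₂.ne]; ring
    rw [e1, hs, hDdef, sub_self, zero_div]
  have hαp := h tp hrootp
  have hαm := h tm hrootm
  have hprod : b₂ * (tp * tm) = b₁ := by
    have e1 : b₂ * (tp * tm) = (c ^ 2 - s ^ 2) / (2 * (2 * b₂)) := by
      rw [htp, htm]; field_simp; ring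
    rw [e1, hs, hDdef]
    field_simp [hb₂.ne]
    ring
  have hP : 0 ≤ tp * (a₁ + e * tm + a₂ * tm ^ 2) - tm * (a₁ + e * tp + a₂ * tp ^ 2) := by
    have h1 : 0 ≤ tp * (a₁ + e * tm + a₂ * tm ^ 2) := mul_nonneg htp0.le hαm
    have h2 : 0 ≤ -tm * (a₁ + e * tp + a₂ * tp ^ 2) :=
      mul_nonneg (by linarith) hαp
    nlinarith [h1, h2]
  have hfac : tp * (a₁ + e * tm + a₂ * tm ^ 2) - tm * (a₁ + e * tp + a₂ * tp ^ 2)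
      = (tp - tm) * (a₁ - a₂ * (tp * tm)) := by ring
  have hdiff : 0 < tp - tm := by linarith
  have hge : 0 ≤ a₁ - a₂ * (tp * tm) := by
    rw [hfac] at hP; nlinarith [hP, hdiff]
  have h2 : a₂ * (b₂ * (tp * tm)) = a₂ * b₁ := by rw [hprod]
  nlinarith [mul_nonpos_of_nonpos_of_nonneg hb₂.le hge, h2]

/-- if `B` is indefinite then `I_≽(A,B) ≠ ∅` iff `wᵀAw ≥ 0` for every
`w` with `wᵀBw = 0`. -/
theorem stmt_2 {n : ℕ} (A B : Matrix (Fin n) (Fin n) ℝ)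
    (hA : A.IsSymm) (hB : B.IsSymm)
    (hpos : ∃ v₁ : Fin n → ℝ, 0 < v₁ ⬝ᵥ B *ᵥ v₁)
    (hneg : ∃ v₂ : Fin n → ℝ, v₂ ⬝ᵥ B *ᵥ v₂ < 0) :
    (∃ σ : ℝ, (A + σ • B).PosSemidef) ↔
      ∀ w : Fin n → ℝ, w ⬝ᵥ B *ᵥ w = 0 → 0 ≤ w ⬝ᵥ A *ᵥ w := by
  have expand : ∀ (σ : ℝ) (x : Fin n → ℝ),
      x ⬝ᵥ (A + σ • B) *ᵥ x = x ⬝ᵥ A *ᵥ x + σ * (x ⬝ᵥ B *ᵥ x) := by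
    intro σ x
    simp [add_mulVec, smul_mulVec, dotProduct_add, dotProduct_smul, smul_eq_mul]
  constructor
  · rintro ⟨σ, hσ⟩ w hw
    have := hσ.dotProduct_mulVec_nonneg w
    simp only [star_trivial] at this
    rw [expand σ w, hw, mul_zero, add_zero] at this
    exact this
  · intro h
    obtain ⟨u₀, hu₀⟩ := hpos
    obtain ⟨v₀, hv₀⟩ := hneg
    -- key comparison
    have key : ∀ u v : Fin n → ℝ, 0 < u ⬝ᵥ B *ᵥ u → v ⬝ᵥ B *ᵥ v < 0 →
        (u ⬝ᵥ A *ᵥ u) * (v ⬝ᵥ B *ᵥ v) ≤ (v ⬝ᵥ A *ᵥ v) * (u ⬝ᵥ B *ᵥ u) := by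
      intro u v hu hv
      apply key_alg _ _ _ _ (u ⬝ᵥ A *ᵥ v + v ⬝ᵥ A *ᵥ u) (u ⬝ᵥ B *ᵥ v + v ⬝ᵥ B *ᵥ u) hu hv
      intro t ht
      have hexp : ∀ (M : Matrix (Fin n) (Fin n) ℝ),
          (u + t • v) ⬝ᵥ M *ᵥ (u + t • v)
            = u ⬝ᵥ M *ᵥ u + (u ⬝ᵥ M *ᵥ v + v ⬝ᵥ M *ᵥ u) * t + (v ⬝ᵥ M *ᵥ v) * t ^ 2 := by
        intro M
        simp [mulVec_add, dotProduct_add, add_dotProduct, mulVec_smul, dotProduct_smul,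
          smul_dotProduct, smul_eq_mul]
        ring
      have hB0 : (u + t • v) ⬝ᵥ B *ᵥ (u + t • v) = 0 := by rw [hexp]; linarith [ht]
      have := h _ hB0
      rw [hexp] at this
      linarith [this]
    -- the set of required lower bounds
    set S : Set ℝ := (fun u => -(u ⬝ᵥ A *ᵥ u) / (u ⬝ᵥ B *ᵥ u)) '' {u | 0 < u ⬝ᵥ B *ᵥ u}
      with hS
    have hSne : S.Nonempty := ⟨_, ⟨u₀, hu₀, rfl⟩⟩
    have hub : ∀ v : Fin n → ℝ, v ⬝ᵥ B *ᵥ v < 0 →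
        (-(v ⬝ᵥ A *ᵥ v) / (v ⬝ᵥ B *ᵥ v)) ∈ upperBounds S := by
      rintro v hv x ⟨u, hu, rfl⟩
      simp only [Set.mem_setOf_eq] at hu
      have hk := key u v hu hv
      show -(u ⬝ᵥ A *ᵥ u) / (u ⬝ᵥ B *ᵥ u) ≤ -(v ⬝ᵥ A *ᵥ v) / (v ⬝ᵥ B *ᵥ v)
      have hrw : -(v ⬝ᵥ A *ᵥ v) / (v ⬝ᵥ B *ᵥ v) = (v ⬝ᵥ A *ᵥ v) / (-(v ⬝ᵥ B *ᵥ v)) := by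
        rw [div_neg, neg_div]
      rw [hrw, div_le_div_iff₀ hu (neg_pos.mpr hv)]
      nlinarith [hk]
    have hbdd : BddAbove S := ⟨_, hub v₀ hv₀⟩
    set σ := sSup S with hσ
    refine ⟨σ, posSemidef_iff_dotProduct_mulVec.mpr ⟨?_, ?_⟩⟩
    · -- Hermitian
      have : (A + σ • B).IsSymm := by
        rw [Matrix.IsSymm, transpose_add, transpose_smul, hA, hB]
      exact isHermitian_iff_isSymm.mpr this
    · intro x
      simp only [star_trivial]
      rw [expand]
      rcases lt_trichotomy (x ⬝ᵥ B *ᵥ x) 0 with hx | hx | hx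
      · have hσle : σ ≤ -(x ⬝ᵥ A *ᵥ x) / (x ⬝ᵥ B *ᵥ x) := csSup_le hSne (hub x hx)
        have := mul_le_mul_of_nonpos_right hσle hx.le
        -- careful direction
        have hcan : (-(x ⬝ᵥ A *ᵥ x) / (x ⬝ᵥ B *ᵥ x)) * (x ⬝ᵥ B *ᵥ x) = -(x ⬝ᵥ A *ᵥ x) :=
          div_mul_cancel₀ _ hx.ne
        nlinarith [this, hcan]
      · rw [hx, mul_zero, add_zero]; exact h x hx
      · have hmem : -(x ⬝ᵥ A *ᵥ x) / (x ⬝ᵥ B *ᵥ x) ∈ S := ⟨x, hx, rfl⟩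
        have hσge : -(x ⬝ᵥ A *ᵥ x) / (x ⬝ᵥ B *ᵥ x) ≤ σ := le_csSup hbdd hmem
        have := mul_le_mul_of_nonneg_right hσge hx.le
        have hcan : (-(x ⬝ᵥ A *ᵥ x) / (x ⬝ᵥ B *ᵥ x)) * (x ⬝ᵥ B *ᵥ x) = -(x ⬝ᵥ A *ᵥ x) :=
          div_mul_cancel₀ _ hx.ne'
        nlinarith [this, hcan]
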